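/- arXiv:2604.04124 — 2 statements merged into one kernel-verified Lean document; each statement's English description precedes it below -/
import Mathlib

section
/- Let r ≥ 1. In 𝔽_q[X_1,…,X_{r+1}] one has the congruence Π_{j=1}^{r} O_f^{(2)}(X_j, X_{r+1}) ≡ Σ_{k=0}^{n−1} D_f(X_1^k)·(Π_{j=1}^{r−1} O_f^{(2)}(X_j, X_r))·X_{r+1}^k modulo the ideal generated by f(X_1),…,f(X_{r+1}). In particular, the rank-(r+1) Weil operator O_f^{(r+1)} equals Σ_{k=0}^{n−1} [D_f(t^k) ∗ O_f^{(r)}]·X_{r+1}^k, and the coefficient of X_{r+1}^{n−1} in O_f^{(r+1)} is O_f^{(r)}. -/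
open Finset MvPolynomial

/-- The rank-two Weil operator `O_g^{(2)}(X_a, X_b) = ∑_{j=1}^{deg g} b_j ∑_{α+β=j-1} X_a^α X_b^β`. -/
noncomputable def weilO2 {F : Type*} [Field F] {σ : Type*} (g : Polynomial F) (a b : σ) :
    MvPolynomial σ F :=
  ∑ j ∈ Finset.range g.natDegree,
    MvPolynomial.C (g.coeff (j + 1)) *
      ∑ pr ∈ Finset.HasAntidiagonal.antidiagonal j, MvPolynomial.X a ^ pr.1 * MvPolynomial.X b ^ pr.2

lemma antidiag_mul {R : Type*} [CommRing R] (x y : R) (j : ℕ) :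
    (∑ pr ∈ Finset.HasAntidiagonal.antidiagonal j, x ^ pr.1 * y ^ pr.2) * (x - y) = x ^ (j+1) - y ^ (j+1) := by
  rw [Finset.Nat.sum_antidiagonal_eq_sum_range_succ_mk]
  rw [← geom_sum₂_mul x y (j+1)]
  congr 1

lemma weilO2_symm {F : Type*} [Field F] {σ : Type*} (f : Polynomial F) (a b : σ) :
    weilO2 f a b = weilO2 f b a := by
  unfold weilO2
  refine Finset.sum_congr rfl fun j _ => ?_
  congr 1
  rw [← Finset.Nat.sum_antidiagonal_swap]
  exact Finset.sum_congr rfl fun p _ => by rw [Prod.fst_swap, Prod.snd_swap, mul_comm]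

lemma weilO2_mul_sub {F : Type*} [Field F] {σ : Type*} (f : Polynomial F) (a b : σ) :
    weilO2 f a b * (X a - X b) =
      Polynomial.aeval (X a : MvPolynomial σ F) f - Polynomial.aeval (X b : MvPolynomial σ F) f := by
  rw [Polynomial.aeval_eq_sum_range (X a : MvPolynomial σ F),
      Polynomial.aeval_eq_sum_range (X b : MvPolynomial σ F), ← Finset.sum_sub_distrib,
      Finset.sum_range_succ']
  simp only [pow_zero, sub_self, smul_zero, add_zero]
  unfold weilO2
  rw [Finset.sum_mul]
  refine Finset.sum_congr rfl fun j _ => ?_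
  rw [mul_assoc, antidiag_mul, smul_eq_C_mul, smul_eq_C_mul, ← mul_sub]

lemma weilO2_eq_sum {F : Type*} [Field F] {σ : Type*} (f : Polynomial F) (a b : σ) :
    weilO2 f a b = ∑ k ∈ Finset.range f.natDegree,
      (∑ j ∈ Finset.range (f.natDegree - k), C (f.coeff (k + j + 1)) * X a ^ j) * X b ^ k := by
  unfold weilO2
  simp only [Finset.Nat.sum_antidiagonal_eq_sum_range_succ_mk, Finset.mul_sum, Finset.sum_mul]
  rw [Finset.sum_sigma', Finset.sum_sigma']
  refine Finset.sum_nbij' (fun p => ⟨p.1 - p.2, p.2⟩) (fun p => ⟨p.1 + p.2, p.2⟩) ?_ ?_ ?_ ?_ ?_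
  · rintro ⟨j, i⟩ h
    simp only [Finset.mem_sigma, Finset.mem_range] at h ⊢
    omega
  · rintro ⟨k, j⟩ h
    simp only [Finset.mem_sigma, Finset.mem_range] at h ⊢
    omega
  · rintro ⟨j, i⟩ h
    simp only [Finset.mem_sigma, Finset.mem_range] at h
    simp only [Sigma.mk.inj_iff, heq_eq_eq, and_true]
    omega
  · rintro ⟨k, j⟩ h
    simp only [Finset.mem_sigma, Finset.mem_range] at h
    simp only [Sigma.mk.inj_iff, heq_eq_eq, and_true]
    omega
  · rintro ⟨j, i⟩ h
    simp only [Finset.mem_sigma, Finset.mem_range] at h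
    have h1 : j - i + i + 1 = j + 1 := by omega
    have h2 : j - i = j - i := rfl
    rw [h1, mul_assoc]

/-- `weilO2 f a c` viewed as a one-variable polynomial in `X c`. -/
noncomputable def weilOP {F : Type*} [Field F] {σ : Type*} (f : Polynomial F) (a : σ) :
    Polynomial (MvPolynomial σ F) :=
  ∑ j ∈ Finset.range f.natDegree,
    Polynomial.C (MvPolynomial.C (f.coeff (j + 1))) *
      ∑ pr ∈ Finset.HasAntidiagonal.antidiagonal j, Polynomial.C (MvPolynomial.X a ^ pr.1) * Polynomial.X ^ pr.2

lemma weilOP_eval {F : Type*} [Field F] {σ : Type*} (f : Polynomial F) (a c : σ) :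
    Polynomial.eval (MvPolynomial.X c) (weilOP f a) = weilO2 f a c := by
  unfold weilOP weilO2
  simp [Polynomial.eval_finset_sum]

lemma gen_mem {F : Type*} [Field F] {σ : Type*} (f : Polynomial F) (i : σ) :
    Polynomial.aeval (MvPolynomial.X i : MvPolynomial σ F) f ∈
      Ideal.span (Set.range fun i : σ =>
        Polynomial.aeval (MvPolynomial.X i : MvPolynomial σ F) f) :=
  Ideal.subset_span ⟨i, rfl⟩

/-- Key pivot lemma: `weilO2 f a c` kills the difference of any polynomial evaluated at
`X a` and at `X c`, modulo the ideal. -/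
lemma pivot_mem {F : Type*} [Field F] {σ : Type*} (f : Polynomial F) (a c : σ)
    (g : Polynomial (MvPolynomial σ F)) :
    weilO2 f a c * (Polynomial.eval (MvPolynomial.X a) g - Polynomial.eval (MvPolynomial.X c) g)
      ∈ Ideal.span (Set.range fun i : σ =>
          Polynomial.aeval (MvPolynomial.X i : MvPolynomial σ F) f) := by
  obtain ⟨s, hs⟩ := Polynomial.sub_dvd_eval_sub (MvPolynomial.X a) (MvPolynomial.X c) g
  rw [hs, ← mul_assoc, weilO2_mul_sub, sub_mul]
  exact Ideal.sub_mem _ (Ideal.mul_mem_right _ _ (gen_mem f a))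
    (Ideal.mul_mem_right _ _ (gen_mem f c))

lemma rename_weilO2 {F : Type*} [Field F] {σ τ : Type*} (f : Polynomial F) (r : σ → τ)
    (a b : σ) : rename r (weilO2 f a b) = weilO2 f (r a) (r b) := by
  unfold weilO2
  simp

lemma ringHom_mem_span {A B : Type*} [CommRing A] [CommRing B] (φ : A →+* B) (S : Set A)
    (J : Ideal B) (h : ∀ x ∈ S, φ x ∈ J) {p : A} (hp : p ∈ Ideal.span S) : φ p ∈ J := by
  refine Submodule.span_induction (p := fun x _ => φ x ∈ J) (fun x hx => h x hx) ?_ ?_ ?_ hp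
  · simp
  · intro x y _ _ hx hy; rw [map_add]; exact J.add_mem hx hy
  · intro a x _ hx; rw [smul_eq_mul, map_mul]; exact J.mul_mem_left _ hx

lemma algebraMap_poly_eq {F : Type*} [Field F] {R : Type*} [CommRing R] [Algebra F R] :
    algebraMap F (Polynomial R) = Polynomial.C.comp (algebraMap F R) :=
  RingHom.ext fun x => Polynomial.algebraMap_apply x

lemma aeval_polyX {F : Type*} [Field F] {R : Type*} [CommRing R] [Algebra F R]
    (f : Polynomial F) :
    Polynomial.aeval (Polynomial.X : Polynomial R) f = f.map (algebraMap F R) := by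
  rw [Polynomial.aeval_def, algebraMap_poly_eq]
  rfl

lemma aeval_polyC {F : Type*} [Field F] {R : Type*} [CommRing R] [Algebra F R]
    (f : Polynomial F) (x : R) :
    Polynomial.aeval (Polynomial.C x : Polynomial R) f = Polynomial.C (Polynomial.aeval x f) := by
  rw [Polynomial.aeval_def, Polynomial.aeval_def, Polynomial.hom_eval₂, ← algebraMap_poly_eq]

/-- Uniqueness of reduced representatives: a member of the ideal generated by the `f(X i)`
with all partial degrees `< deg f` is zero. -/
lemma mem_span_degreeOf_lt_eq_zero {F : Type*} [Field F] (f : Polynomial F) (hf : f.Monic) :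
    ∀ (s : ℕ) (P : MvPolynomial (Fin s) F),
      P ∈ Ideal.span (Set.range fun i : Fin s =>
        Polynomial.aeval (MvPolynomial.X i : MvPolynomial (Fin s) F) f) →
      (∀ v, MvPolynomial.degreeOf v P < f.natDegree) → P = 0 := by
  intro s
  induction s with
  | zero =>
    intro P hP _
    rw [Set.range_eq_empty, Ideal.span_empty] at hP
    simpa using hP
  | succ s ih =>
    intro P hP hdeg
    set R := MvPolynomial (Fin s) F
    set Ismall : Ideal R := Ideal.span (Set.range fun i : Fin s =>
      Polynomial.aeval (MvPolynomial.X i : R) f) with hIs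
    set mk : R →+* R ⧸ Ismall := Ideal.Quotient.mk Ismall with hmk
    set e := MvPolynomial.finSuccEquiv F s
    set φ : MvPolynomial (Fin (s+1)) F →+* Polynomial (R ⧸ Ismall) :=
      (Polynomial.mapRingHom mk).comp (e : MvPolynomial (Fin (s+1)) F →+* Polynomial R) with hφ
    set g0 : Polynomial (R ⧸ Ismall) := f.map (mk.comp (algebraMap F R)) with hg0
    have hg0monic : g0.Monic := hf.map _
    -- the image of P lies in the ideal generated by g0
    have hmem : φ P ∈ Ideal.span {g0} := by
      refine ringHom_mem_span (A := MvPolynomial (Fin (s+1)) F) (B := Polynomial (R ⧸ Ismall)) φ _ _ ?_ hP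
      rintro _ ⟨i, rfl⟩
      refine Fin.cases ?_ ?_ i
      · have h1 : e (Polynomial.aeval (MvPolynomial.X 0 : MvPolynomial (Fin (s+1)) F) f)
            = Polynomial.aeval (Polynomial.X : Polynomial R) f := by
          rw [← MvPolynomial.finSuccEquiv_X_zero (R := F) (n := s)]
          exact (Polynomial.aeval_algHom_apply (e : MvPolynomial (Fin (s+1)) F ≃ₐ[F] _).toAlgHom
            (MvPolynomial.X 0) f).symm
        have h3 : φ (Polynomial.aeval (MvPolynomial.X 0 : MvPolynomial (Fin (s+1)) F) f) = g0 := by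
          rw [hφ, RingHom.comp_apply]
          change Polynomial.map mk (e _) = g0
          rw [h1, aeval_polyX, Polynomial.map_map]
        rw [h3]
        exact Ideal.subset_span rfl
      · intro j
        have h1 : e (Polynomial.aeval (MvPolynomial.X j.succ : MvPolynomial (Fin (s+1)) F) f)
            = Polynomial.aeval (Polynomial.C (MvPolynomial.X j : R)) f := by
          rw [← MvPolynomial.finSuccEquiv_X_succ (R := F) (n := s) (j := j)]
          exact (Polynomial.aeval_algHom_apply (e : MvPolynomial (Fin (s+1)) F ≃ₐ[F] _).toAlgHom
            (MvPolynomial.X j.succ) f).symm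
        have h3 : φ (Polynomial.aeval (MvPolynomial.X j.succ : MvPolynomial (Fin (s+1)) F) f)
            = 0 := by
          rw [hφ, RingHom.comp_apply]
          change Polynomial.map mk (e _) = 0
          rw [h1, aeval_polyC, Polynomial.map_C]
          have : mk (Polynomial.aeval (MvPolynomial.X j : R) f) = 0 := by
            rw [hmk, Ideal.Quotient.eq_zero_iff_mem]
            exact gen_mem f j
          rw [this, Polynomial.C_0]
        rw [h3]
        exact Ideal.zero_mem _
    -- the image of P is zero, by a degree argument
    have hq0 : φ P = 0 := by
      rcases subsingleton_or_nontrivial (R ⧸ Ismall) with hsub | hnon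
      · exact Subsingleton.elim _ _
      obtain ⟨c, hc⟩ := (Ideal.mem_span_singleton (α := Polynomial (R ⧸ Ismall))).mp hmem
      by_cases hczero : c = 0
      · rw [hc, hczero, mul_zero]
      exfalso
      have hdegφ : (φ P).natDegree < f.natDegree := by
        have h1 : (φ P).natDegree ≤ (e P).natDegree := by
          rw [hφ, RingHom.comp_apply]
          exact Polynomial.natDegree_map_le
        have h2 : (e P).natDegree = MvPolynomial.degreeOf 0 P :=
          MvPolynomial.natDegree_finSuccEquiv P
        exact lt_of_le_of_lt (h1.trans_eq h2) (hdeg 0)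
      have hmul : (g0 * c).natDegree = g0.natDegree + c.natDegree :=
        Polynomial.natDegree_mul' (by
          rw [hg0monic.leadingCoeff, one_mul]
          exact Polynomial.leadingCoeff_ne_zero.mpr hczero)
      have hg0deg : g0.natDegree = f.natDegree := hf.natDegree_map _
      rw [hc, hmul, hg0deg] at hdegφ
      omega
    -- hence all coefficients of `e P` lie in the small ideal, and vanish by induction
    have hcoeff : ∀ k, (e P).coeff k = 0 := by
      intro k
      have hk : mk ((e P).coeff k) = 0 := by
        have : (Polynomial.map mk (e P)).coeff k = 0 := by
          rw [show Polynomial.map mk (e P) = φ P from rfl, hq0, Polynomial.coeff_zero]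
        rwa [Polynomial.coeff_map] at this
      have hkmem : (e P).coeff k ∈ Ismall := by
        rwa [hmk, Ideal.Quotient.eq_zero_iff_mem] at hk
      refine ih _ hkmem fun v => ?_
      exact lt_of_le_of_lt (MvPolynomial.degreeOf_coeff_finSuccEquiv P v k) (hdeg v.succ)
    have heP : e P = 0 := Polynomial.ext fun k => by rw [hcoeff k, Polynomial.coeff_zero]
    have h0 : e P = e 0 := by rw [heP, map_zero]
    exact e.injective h0

lemma weil_key2 {F : Type*} [Field F] (f : Polynomial F) (m : ℕ) :
    weilO2 f (Fin.castSucc (Fin.last m)) (Fin.last (m+1))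
        * (∏ j : Fin m, weilO2 f (Fin.castSucc (Fin.castSucc j)) (Fin.castSucc (Fin.last m)))
      - weilO2 f (0 : Fin (m+2)) (Fin.last (m+1))
        * (∏ j : Fin m, weilO2 f (Fin.castSucc (Fin.castSucc j)) (Fin.castSucc (Fin.last m)))
      ∈ Ideal.span (Set.range fun i : Fin (m + 2) =>
          Polynomial.aeval (MvPolynomial.X i : MvPolynomial (Fin (m + 2)) F) f) := by
  cases m with
  | zero =>
    have : Fin.castSucc (Fin.last 0) = (0 : Fin 2) := rfl
    rw [this, sub_self]
    exact Ideal.zero_mem _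
  | succ m' =>
    set lst : Fin (m'+3) := Fin.last (m'+2) with hlst
    set cl : Fin (m'+3) := Fin.castSucc (Fin.last (m'+1)) with hcl
    set P : MvPolynomial (Fin (m'+3)) F :=
      ∏ j : Fin (m'+1), weilO2 f (Fin.castSucc (Fin.castSucc j)) cl with hP
    set Rrest : MvPolynomial (Fin (m'+3)) F :=
      ∏ j : Fin m', weilO2 f (Fin.castSucc (Fin.castSucc j.succ)) cl with hR
    have hPsplit : P = weilO2 f (0 : Fin (m'+3)) cl * Rrest := by
      rw [hP, Fin.prod_univ_succ]
      rfl
    have h := pivot_mem f cl 0 (weilOP f lst)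
    rw [weilOP_eval f lst cl, weilOP_eval f lst 0] at h
    have heq : weilO2 f cl lst * P - weilO2 f (0 : Fin (m'+3)) lst * P =
        (weilO2 f cl (0 : Fin (m'+3)) * (weilO2 f lst cl - weilO2 f lst (0 : Fin (m'+3))))
          * Rrest := by
      rw [hPsplit, weilO2_symm f cl 0, weilO2_symm f lst cl, weilO2_symm f lst 0]; ring
    rw [heq]
    exact Ideal.mul_mem_right _ _ h

lemma degreeOf_rename_castSucc_last {F : Type*} [Field F] {m : ℕ}
    (p : MvPolynomial (Fin (m+1)) F) :
    MvPolynomial.degreeOf (Fin.last (m+1)) (rename Fin.castSucc p) = 0 := by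
  classical
  rw [MvPolynomial.degreeOf_def]
  refine Multiset.count_eq_zero.mpr fun h => ?_
  have h2 := MvPolynomial.degrees_rename Fin.castSucc p h
  obtain ⟨w, _, hw⟩ := Multiset.mem_map.mp h2
  exact (Fin.castSucc_lt_last w).ne hw

/-- The main congruence (part 1 of the theorem). -/
lemma weil_congr {F : Type*} [Field F] (f : Polynomial F) (m : ℕ) :
    ((∏ j : Fin (m + 1), weilO2 f (Fin.castSucc j) (Fin.last (m + 1)))
        - (∑ k ∈ Finset.range f.natDegree,
            (∑ j ∈ Finset.range (f.natDegree - k),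
                MvPolynomial.C (f.coeff (k + j + 1)) * MvPolynomial.X (0 : Fin (m + 2)) ^ j)
              * (∏ j : Fin m, weilO2 f (Fin.castSucc (Fin.castSucc j))
                  (Fin.castSucc (Fin.last m)))
              * MvPolynomial.X (Fin.last (m + 1)) ^ k)
        ∈ Ideal.span (Set.range fun i : Fin (m + 2) =>
            Polynomial.aeval (MvPolynomial.X i : MvPolynomial (Fin (m + 2)) F) f)) := by
  set lst : Fin (m+2) := Fin.last (m+1) with hlst
  set cl : Fin (m+2) := Fin.castSucc (Fin.last m) with hcl
  set I : Ideal (MvPolynomial (Fin (m+2)) F) := Ideal.span (Set.range fun i : Fin (m + 2) =>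
    Polynomial.aeval (MvPolynomial.X i : MvPolynomial (Fin (m + 2)) F) f) with hI
  set P : MvPolynomial (Fin (m+2)) F :=
    ∏ j : Fin m, weilO2 f (Fin.castSucc (Fin.castSucc j)) cl with hP
  set L : MvPolynomial (Fin (m+2)) F :=
    ∏ j : Fin (m+1), weilO2 f (Fin.castSucc j) lst with hL
  -- the claimed sum equals `weilO2 f 0 lst * P`
  have hE : (∑ k ∈ Finset.range f.natDegree,
      (∑ j ∈ Finset.range (f.natDegree - k),
          MvPolynomial.C (f.coeff (k + j + 1)) * MvPolynomial.X (0 : Fin (m + 2)) ^ j)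
        * P * MvPolynomial.X lst ^ k) = weilO2 f (0 : Fin (m+2)) lst * P := by
    rw [weilO2_eq_sum f (0 : Fin (m+2)) lst, Finset.sum_mul]
    exact Finset.sum_congr rfl fun k _ => by ring
  rw [hE]
  -- first pivot : replace `lst` by `cl` in the first `m` factors
  have hGP : ∀ c : Fin (m+2),
      Polynomial.eval (MvPolynomial.X c)
        (∏ j : Fin m, weilOP f (Fin.castSucc (Fin.castSucc j)))
      = ∏ j : Fin m, weilO2 f (Fin.castSucc (Fin.castSucc j)) c := by
    intro c
    rw [Polynomial.eval_prod]
    exact Finset.prod_congr rfl fun j _ => weilOP_eval f _ c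
  have hLsplit : L = (∏ j : Fin m, weilO2 f (Fin.castSucc (Fin.castSucc j)) lst)
      * weilO2 f cl lst := Fin.prod_univ_castSucc _
  have hkey1 : L - weilO2 f cl lst * P ∈ I := by
    have h := pivot_mem f lst cl (∏ j : Fin m, weilOP f (Fin.castSucc (Fin.castSucc j)))
    rw [hGP lst, hGP cl] at h
    have heq : L - weilO2 f cl lst * P =
        weilO2 f lst cl *
          ((∏ j : Fin m, weilO2 f (Fin.castSucc (Fin.castSucc j)) lst) - P) := by
      rw [hLsplit, weilO2_symm f lst cl]; ring
    rw [heq]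
    exact h
  have hkey2 : weilO2 f cl lst * P - weilO2 f (0 : Fin (m+2)) lst * P ∈ I :=
    weil_key2 f m
  have := I.add_mem hkey1 hkey2
  rwa [sub_add_sub_cancel] at this


/-- Let `r = m + 1 ≥ 1`.  In `𝔽_q[X_1,…,X_{r+1}]` one has
`∏_{j=1}^{r} O_f^{(2)}(X_j, X_{r+1})
  ≡ ∑_{k=0}^{n-1} D_f(X_1^k)·(∏_{j=1}^{r-1} O_f^{(2)}(X_j, X_r))·X_{r+1}^k`
modulo the ideal generated by `f(X_1),…,f(X_{r+1})`.  In particular, the rank-(r+1) Weil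
operator `O_f^{(r+1)}` (the unique representative `Q` with all partial degrees `< n`) equals
`∑_{k=0}^{n-1} [D_f(t^k) ∗ O_f^{(r)}]·X_{r+1}^k`, where `[D_f(t^k) ∗ O_f^{(r)}]` is the unique
representative `T k` with partial degrees `< n`; hence the coefficient of `X_{r+1}^{n-1}` in
`O_f^{(r+1)}` is `O_f^{(r)} = T (n-1)`. -/
theorem weil_operator_recursive {F : Type*} [Field F] [Fintype F]
    (f : Polynomial F) (hf : f.Monic) (n : ℕ) (hn : f.natDegree = n) (hn1 : 1 ≤ n)
    (m : ℕ)
    (Q : MvPolynomial (Fin (m + 2)) F)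
    (hQdeg : ∀ v : Fin (m + 2), MvPolynomial.degreeOf v Q < n)
    (hQ : Q - (∏ j : Fin (m + 1), weilO2 f (Fin.castSucc j) (Fin.last (m + 1)))
      ∈ Ideal.span (Set.range fun i : Fin (m + 2) =>
          Polynomial.aeval (MvPolynomial.X i : MvPolynomial (Fin (m + 2)) F) f))
    (T : ℕ → MvPolynomial (Fin (m + 1)) F)
    (hTdeg : ∀ k < n, ∀ v : Fin (m + 1), MvPolynomial.degreeOf v (T k) < n)
    (hT : ∀ k < n, T k -
        (∑ j ∈ Finset.range (n - k),
            MvPolynomial.C (f.coeff (k + j + 1)) * MvPolynomial.X (0 : Fin (m + 1)) ^ j)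
          * (∏ j : Fin m, weilO2 f (Fin.castSucc j) (Fin.last m))
      ∈ Ideal.span (Set.range fun i : Fin (m + 1) =>
          Polynomial.aeval (MvPolynomial.X i : MvPolynomial (Fin (m + 1)) F) f)) :
    ((∏ j : Fin (m + 1), weilO2 f (Fin.castSucc j) (Fin.last (m + 1)))
        - (∑ k ∈ Finset.range n,
            (∑ j ∈ Finset.range (n - k),
                MvPolynomial.C (f.coeff (k + j + 1)) * MvPolynomial.X (0 : Fin (m + 2)) ^ j)
              * (∏ j : Fin m, weilO2 f (Fin.castSucc (Fin.castSucc j))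
                  (Fin.castSucc (Fin.last m)))
              * MvPolynomial.X (Fin.last (m + 1)) ^ k)
        ∈ Ideal.span (Set.range fun i : Fin (m + 2) =>
            Polynomial.aeval (MvPolynomial.X i : MvPolynomial (Fin (m + 2)) F) f))
    ∧ (Q = ∑ k ∈ Finset.range n,
        MvPolynomial.rename Fin.castSucc (T k) * MvPolynomial.X (Fin.last (m + 1)) ^ k) := by
  subst hn
  refine ⟨weil_congr f m, ?_⟩
  set n := f.natDegree with hn
  set lst : Fin (m+2) := Fin.last (m+1) with hlst
  set I : Ideal (MvPolynomial (Fin (m+2)) F) := Ideal.span (Set.range fun i : Fin (m + 2) =>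
    Polynomial.aeval (MvPolynomial.X i : MvPolynomial (Fin (m + 2)) F) f) with hI
  set P : MvPolynomial (Fin (m+2)) F :=
    ∏ j : Fin m, weilO2 f (Fin.castSucc (Fin.castSucc j)) (Fin.castSucc (Fin.last m)) with hP
  set S : MvPolynomial (Fin (m+2)) F :=
    ∑ k ∈ Finset.range n, MvPolynomial.rename Fin.castSucc (T k)
      * MvPolynomial.X lst ^ k with hS
  -- renaming maps the small ideal into the big one
  have hrenmem : ∀ x : MvPolynomial (Fin (m+1)) F,
      x ∈ Ideal.span (Set.range fun i : Fin (m + 1) =>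
        Polynomial.aeval (MvPolynomial.X i : MvPolynomial (Fin (m + 1)) F) f) →
      MvPolynomial.rename (Fin.castSucc : Fin (m+1) → Fin (m+2)) x ∈ I := by
    intro x hx
    refine ringHom_mem_span (MvPolynomial.rename Fin.castSucc).toRingHom _ I ?_ hx
    rintro _ ⟨i, rfl⟩
    have : (MvPolynomial.rename (Fin.castSucc : Fin (m+1) → Fin (m+2)))
        (Polynomial.aeval (MvPolynomial.X i) f)
        = Polynomial.aeval (MvPolynomial.X (Fin.castSucc i) : MvPolynomial (Fin (m+2)) F) f := by
      rw [← MvPolynomial.rename_X (Fin.castSucc : Fin (m+1) → Fin (m+2)) i]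
      exact (Polynomial.aeval_algHom_apply (MvPolynomial.rename Fin.castSucc)
        (MvPolynomial.X i) f).symm
    change (MvPolynomial.rename (Fin.castSucc : Fin (m+1) → Fin (m+2)))
        (Polynomial.aeval (MvPolynomial.X i) f) ∈ I
    rw [this]
    exact gen_mem f _
  -- each term congruence
  have hterm : ∀ k ∈ Finset.range n,
      (∑ j ∈ Finset.range (n - k),
          MvPolynomial.C (f.coeff (k + j + 1)) * MvPolynomial.X (0 : Fin (m + 2)) ^ j) * P
        - MvPolynomial.rename Fin.castSucc (T k) ∈ I := by
    intro k hk
    have hkn := Finset.mem_range.mp hk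
    have h1 := hrenmem _ (hT k hkn)
    rw [map_sub] at h1
    have h2 : (MvPolynomial.rename (Fin.castSucc : Fin (m+1) → Fin (m+2)))
        ((∑ j ∈ Finset.range (n - k),
            MvPolynomial.C (f.coeff (k + j + 1)) * MvPolynomial.X (0 : Fin (m + 1)) ^ j)
          * (∏ j : Fin m, weilO2 f (Fin.castSucc j) (Fin.last m)))
        = (∑ j ∈ Finset.range (n - k),
            MvPolynomial.C (f.coeff (k + j + 1)) * MvPolynomial.X (0 : Fin (m + 2)) ^ j) * P := by
      rw [map_mul, map_sum, map_prod]
      congr 1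
      · refine Finset.sum_congr rfl fun j _ => ?_
        rw [map_mul, map_pow, MvPolynomial.rename_C, MvPolynomial.rename_X]
        norm_num
      · refine Finset.prod_congr rfl fun j _ => ?_
        rw [rename_weilO2]
    rw [h2] at h1
    have := I.neg_mem h1
    rwa [neg_sub] at this
  -- `RHS1 - S ∈ I`
  have hRS : (∑ k ∈ Finset.range n,
      (∑ j ∈ Finset.range (n - k),
          MvPolynomial.C (f.coeff (k + j + 1)) * MvPolynomial.X (0 : Fin (m + 2)) ^ j)
        * P * MvPolynomial.X lst ^ k) - S ∈ I := by
    rw [hS, ← Finset.sum_sub_distrib]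
    refine Ideal.sum_mem I fun k hk => ?_
    rw [← sub_mul]
    exact Ideal.mul_mem_right _ _ (hterm k hk)
  -- `Q - S ∈ I`
  have hQS : Q - S ∈ I := by
    have h1 := I.add_mem hQ (weil_congr f m)
    rw [sub_add_sub_cancel] at h1
    have h2 := I.add_mem h1 hRS
    rwa [sub_add_sub_cancel] at h2
  -- degree bounds for `S`
  have hSdeg : ∀ v : Fin (m+2), MvPolynomial.degreeOf v S < n := by
    intro v
    refine lt_of_le_of_lt (MvPolynomial.degreeOf_sum_le v _ _) ?_
    rw [Finset.sup_lt_iff (lt_of_lt_of_le Nat.zero_lt_one hn1 : (⊥ : ℕ) < n)]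
    intro k hk
    have hkn := Finset.mem_range.mp hk
    refine lt_of_le_of_lt (MvPolynomial.degreeOf_mul_le v _ _) ?_
    rcases Fin.eq_castSucc_or_eq_last v with ⟨w, rfl⟩ | rfl
    · have hd1 : MvPolynomial.degreeOf (Fin.castSucc w)
          (MvPolynomial.rename Fin.castSucc (T k)) = MvPolynomial.degreeOf w (T k) :=
        MvPolynomial.degreeOf_rename_of_injective (Fin.castSucc_injective _) w
      have hd2 : MvPolynomial.degreeOf (Fin.castSucc w)
          ((MvPolynomial.X lst : MvPolynomial (Fin (m+2)) F) ^ k) = 0 := by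
        refine Nat.le_zero.mp (le_trans (MvPolynomial.degreeOf_pow_le _ _ _) ?_)
        classical
        rw [MvPolynomial.degreeOf_X, if_neg (Fin.castSucc_lt_last w).ne, mul_zero]
      rw [hd1, hd2, add_zero]
      exact hTdeg k hkn w
    · have hd1 : MvPolynomial.degreeOf lst (MvPolynomial.rename
          (Fin.castSucc : Fin (m+1) → Fin (m+2)) (T k)) = 0 :=
        degreeOf_rename_castSucc_last (T k)
      have hd2 : MvPolynomial.degreeOf lst
          ((MvPolynomial.X lst : MvPolynomial (Fin (m+2)) F) ^ k) ≤ k := by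
        refine le_trans (MvPolynomial.degreeOf_pow_le _ _ _) ?_
        classical
        rw [MvPolynomial.degreeOf_X, if_pos rfl, mul_one]
      rw [hd1, zero_add]
      exact lt_of_le_of_lt hd2 hkn
  -- conclude by uniqueness
  have hzero : Q - S = 0 := by
    refine mem_span_degreeOf_lt_eq_zero f hf (m+2) (Q - S) hQS fun v => ?_
    exact lt_of_le_of_lt (MvPolynomial.degreeOf_sub_le v Q S)
      (max_lt (hQdeg v) (hSdeg v))
  exact sub_eq_zero.mp hzero
end

section
/- Suppose f = m·n is a product of two monic polynomials m, n ∈ 𝔽_q[t], and let r ≥ 2. Then, modulo the ideal of 𝔽_q[X_1,…,X_r] generated by m(X_1),…,m(X_r), one has (Π_{i=1}^{r−1} n(X_i))·Π_{j=1}^{r−1} O_m^{(2)}(X_j, X_r) ≡ Π_{j=1}^{r−1} O_f^{(2)}(X_j, X_r); that is, [n(t)^{r−1} ∗ O_m^{(r)}] ≡ O_f^{(r)} Mod m(*). In particular, for f = p^k one has [p^{(r−1)(k−1)} ∗ O_p^{(r)}] ≡ O_{p^k}^{(r)} Mod p(*). -/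
open Finset MvPolynomial

lemma sub_mul_weilO2 {F : Type*} [Field F] {σ : Type*} (g : Polynomial F) (a b : σ) :
    (MvPolynomial.X a - MvPolynomial.X b) * weilO2 g a b
      = Polynomial.aeval (MvPolynomial.X a : MvPolynomial σ F) g
        - Polynomial.aeval (MvPolynomial.X b : MvPolynomial σ F) g := by
  rw [weilO2, Finset.mul_sum, Polynomial.aeval_eq_sum_range, Polynomial.aeval_eq_sum_range,
    ← Finset.sum_sub_distrib, Finset.sum_range_succ']
  simp only [pow_zero, sub_self, add_zero, ← smul_sub]
  refine Finset.sum_congr rfl fun j _ => ?_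
  have h : ∑ pr ∈ Finset.HasAntidiagonal.antidiagonal j,
      (MvPolynomial.X a : MvPolynomial σ F) ^ pr.1 * MvPolynomial.X b ^ pr.2
      = ∑ i ∈ Finset.range (j + 1),
        (MvPolynomial.X a : MvPolynomial σ F) ^ i * MvPolynomial.X b ^ (j + 1 - 1 - i) := by
    rw [Finset.Nat.sum_antidiagonal_eq_sum_range_succ_mk]
    simp
  rw [h, smul_eq_C_mul, ← geom_sum₂_mul (MvPolynomial.X a : MvPolynomial σ F)
    (MvPolynomial.X b) (j + 1)]
  ring

lemma weilO2_mul {F : Type*} [Field F] {σ : Type*} (m n : Polynomial F) {a b : σ} (hab : a ≠ b) :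
    weilO2 (m * n) a b
      = Polynomial.aeval (MvPolynomial.X a : MvPolynomial σ F) n * weilO2 m a b
        + Polynomial.aeval (MvPolynomial.X b : MvPolynomial σ F) m * weilO2 n a b := by
  have hX : (MvPolynomial.X a - MvPolynomial.X b : MvPolynomial σ F) ≠ 0 :=
    sub_ne_zero.mpr fun h => hab (MvPolynomial.X_injective h)
  apply mul_left_cancel₀ hX
  rw [mul_add, sub_mul_weilO2, mul_left_comm, sub_mul_weilO2, mul_left_comm, sub_mul_weilO2]
  simp only [map_mul]
  ring

lemma main_part {F : Type*} [Field F] (s : ℕ) (mm nn : Polynomial F) :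
    ((∏ i : Fin (s + 1),
        Polynomial.aeval (MvPolynomial.X (Fin.castSucc i) : MvPolynomial (Fin (s + 2)) F) nn)
      * ∏ j : Fin (s + 1), weilO2 mm (Fin.castSucc j) (Fin.last (s + 1)))
      - (∏ j : Fin (s + 1), weilO2 (mm * nn) (Fin.castSucc j) (Fin.last (s + 1)))
      ∈ Ideal.span (Set.range fun i : Fin (s + 2) =>
          Polynomial.aeval (MvPolynomial.X i : MvPolynomial (Fin (s + 2)) F) mm) := by
  set I := Ideal.span (Set.range fun i : Fin (s + 2) =>
      Polynomial.aeval (MvPolynomial.X i : MvPolynomial (Fin (s + 2)) F) mm)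
  rw [← Ideal.Quotient.eq]
  have hz : Ideal.Quotient.mk I
      (Polynomial.aeval (MvPolynomial.X (Fin.last (s + 1)) : MvPolynomial (Fin (s + 2)) F) mm)
      = 0 :=
    Ideal.Quotient.eq_zero_iff_mem.mpr (Ideal.subset_span ⟨Fin.last (s + 1), rfl⟩)
  simp only [map_mul, map_prod]
  rw [← Finset.prod_mul_distrib]
  refine Finset.prod_congr rfl fun j _ => ?_
  rw [← map_mul]
  have hne : Fin.castSucc j ≠ Fin.last (s + 1) := (Fin.castSucc_lt_last j).ne
  rw [weilO2_mul mm nn hne, map_add, map_mul, map_mul, hz, zero_mul, add_zero]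

/-- Suppose `f = m·n` with `m, n` monic and let `r = s + 2 ≥ 2`.  Then, modulo
the ideal generated by `m(X_1),…,m(X_r)`,
`(∏_{i=1}^{r-1} n(X_i))·∏_{j=1}^{r-1} O_m^{(2)}(X_j, X_r) ≡ ∏_{j=1}^{r-1} O_f^{(2)}(X_j, X_r)`,
i.e. `[n(t)^{r-1} ∗ O_m^{(r)}] ≡ O_f^{(r)} Mod m(*)`.  In particular, for `f = p^k` one has
`[p^{(r-1)(k-1)} ∗ O_p^{(r)}] ≡ O_{p^k}^{(r)} Mod p(*)`. -/
theorem weil_operator_modulus_change {F : Type*} [Field F] [Fintype F]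
    (s : ℕ) :
    (∀ mm nn : Polynomial F, mm.Monic → nn.Monic →
      ((∏ i : Fin (s + 1),
          Polynomial.aeval (MvPolynomial.X (Fin.castSucc i) : MvPolynomial (Fin (s + 2)) F) nn)
        * ∏ j : Fin (s + 1), weilO2 mm (Fin.castSucc j) (Fin.last (s + 1)))
        - (∏ j : Fin (s + 1), weilO2 (mm * nn) (Fin.castSucc j) (Fin.last (s + 1)))
        ∈ Ideal.span (Set.range fun i : Fin (s + 2) =>
            Polynomial.aeval (MvPolynomial.X i : MvPolynomial (Fin (s + 2)) F) mm))
    ∧ (∀ p : Polynomial F, p.Monic → Irreducible p → ∀ k : ℕ, 1 ≤ k →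
      ((∏ i : Fin (s + 1),
          Polynomial.aeval (MvPolynomial.X (Fin.castSucc i) : MvPolynomial (Fin (s + 2)) F)
            (p ^ (k - 1)))
        * ∏ j : Fin (s + 1), weilO2 p (Fin.castSucc j) (Fin.last (s + 1)))
        - (∏ j : Fin (s + 1), weilO2 (p ^ k) (Fin.castSucc j) (Fin.last (s + 1)))
        ∈ Ideal.span (Set.range fun i : Fin (s + 2) =>
            Polynomial.aeval (MvPolynomial.X i : MvPolynomial (Fin (s + 2)) F) p)) := by
  constructor
  · exact fun mm nn _ _ => main_part s mm nn
  · intro p _ _ k hk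
    have hpk : p ^ k = p * p ^ (k - 1) := by
      rw [← pow_succ']
      congr 1
      omega
    rw [hpk]
    exact main_part s p (p ^ (k - 1))
end
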